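/- Let m and k be positive integers, and consider the assignment problem with couples with 4m hospitals H = {h₁,…,h_{2m}, h'₁,…,h'_{2m}}; 2m(2k+1) single interns, each of whose M-rows equals 1/(2m) at every h'_j and 0 at every h_j; and m(2k+1) couples, each of whose members' M-rows equal 1/(2m) at every h_j and 0 at every h'_j (so every hospital has capacity 2k+1). Then in every deterministic assignment matrix M' for this problem, each hospital h_j is assigned at most k couples (hence coupled interns occupy at most 2k of its 2k+1 seats), so in total the coupled interns occupy at most 4mk seats in the hospitals {h₁,…,h_{2m}}, and consequently the single interns occupy at least 2m seats in the hospitals {h₁,…,h_{2m}}. -/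
import Mathlib


open Finset

/-- `(S, C, H, M)` (with `I`, `H` types of interns and hospitals) is an assignment problem
with couples: `S` is the set of single interns, `C` the set of couples (ordered pairs of
members), every intern is a single or a member of a couple, members of couples are distinct
from each other, from the singles, and from members of other couples, `M ∈ [0,1]^{I×H}`,
each row of `M` sums to `1`, and both members of a couple have identical rows. -/
def IsCouplesProblem {I H : Type*} [Fintype I] [Fintype H]
    (S : Finset I) (C : Finset (I × I)) (M : I → H → ℝ) : Prop :=
  (∀ i : I, i ∈ S ∨ ∃ c ∈ C, i = c.1 ∨ i = c.2) ∧
  (∀ c ∈ C, c.1 ∉ S ∧ c.2 ∉ S ∧ c.1 ≠ c.2) ∧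
  (∀ c ∈ C, ∀ c' ∈ C, c ≠ c' →
    c.1 ≠ c'.1 ∧ c.1 ≠ c'.2 ∧ c.2 ≠ c'.1 ∧ c.2 ≠ c'.2) ∧
  (∀ (i : I) (h : H), 0 ≤ M i h ∧ M i h ≤ 1) ∧
  (∀ i : I, ∑ h : H, M i h = 1) ∧
  (∀ c ∈ C, ∀ h : H, M c.1 h = M c.2 h)

/-- `M'` is a deterministic assignment matrix with respect to the problem with couples `C`
and target matrix `M`: its entries are in `{0,1}`, rows sum to `1`, both members of each
couple have identical rows, and each column sum equals the capacity `q_h = ∑ i, M i h`. -/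
def IsDeterministicAssignment {I H : Type*} [Fintype I] [Fintype H]
    (C : Finset (I × I)) (M M' : I → H → ℝ) : Prop :=
  (∀ (i : I) (h : H), M' i h = 0 ∨ M' i h = 1) ∧
  (∀ i : I, ∑ h : H, M' i h = 1) ∧
  (∀ c ∈ C, ∀ h : H, M' c.1 h = M' c.2 h) ∧
  (∀ h : H, ∑ i : I, M' i h = ∑ i : I, M i h)


/-- Interns in the small-probabilities example: `2m(2k+1)` singles (the left summand) and
`m(2k+1)` couples, each couple having two members indexed by `Bool` (the right summand). -/
abbrev SPIntern (m k : ℕ) := Fin (2 * m * (2 * k + 1)) ⊕ (Fin (m * (2 * k + 1)) × Bool)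

/-- Hospitals in the small-probabilities example: `(true, j)` is `h_j` and `(false, j)` is
`h'_j`, for `j ∈ {1, …, 2m}`. -/
abbrev SPHospital (m : ℕ) := Bool × Fin (2 * m)

/-- The target matrix of the small-probabilities example: each single gets probability
`1/(2m)` at each `h'_j` (and `0` at each `h_j`), and each member of a couple gets
probability `1/(2m)` at each `h_j` (and `0` at each `h'_j`). -/
noncomputable def spM (m k : ℕ) : SPIntern m k → SPHospital m → ℝ
  | Sum.inl _, (b, _) => if b then 0 else 1 / (2 * m)
  | Sum.inr _, (b, _) => if b then 1 / (2 * m) else 0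

/-- The set of single interns of the small-probabilities example. -/
def spS (m k : ℕ) : Finset (SPIntern m k) := Finset.univ.image Sum.inl

/-- The set of couples of the small-probabilities example. -/
def spC (m k : ℕ) : Finset (SPIntern m k × SPIntern m k) :=
  Finset.univ.image fun j : Fin (m * (2 * k + 1)) =>
    (Sum.inr (j, false), Sum.inr (j, true))

lemma sp_sum_zero_one {α : Type*} (s : Finset α) (f : α → ℝ)
    (hf : ∀ x ∈ s, f x = 0 ∨ f x = 1) :
    ∑ x ∈ s, f x = ((s.filter fun x => f x = 1).card : ℝ) := by
  rw [← Finset.sum_filter_add_sum_filter_not s (fun x => f x = 1)]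
  rw [Finset.sum_congr rfl (fun x hx => (Finset.mem_filter.mp hx).2),
    Finset.sum_const, nsmul_eq_mul, mul_one]
  have : ∑ x ∈ s.filter (fun x => ¬ f x = 1), f x = 0 := by
    apply Finset.sum_eq_zero
    intro x hx
    rcases hf x (Finset.mem_filter.mp hx).1 with h | h
    · exact h
    · exact absurd h (Finset.mem_filter.mp hx).2
  rw [this, add_zero]

lemma spC_inj (m k : ℕ) : Function.Injective
    (fun j : Fin (m * (2 * k + 1)) =>
      ((Sum.inr (j, false), Sum.inr (j, true)) : SPIntern m k × SPIntern m k)) := by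
  intro a b h
  simpa using congrArg (fun p => p.1) h

/-- in the small-probabilities example (for positive `m`, `k`), any
deterministic assignment matrix assigns at most `k` couples to each hospital `h_j`, the
coupled interns occupy at most `4mk` seats in total in the hospitals `h₁, …, h_{2m}`, and
consequently the single interns occupy at least `2m` seats in those hospitals. -/
theorem small_probabilities_deterministic (m k : ℕ) (hm : 0 < m) (hk : 0 < k)
    (M' : SPIntern m k → SPHospital m → ℝ)
    (hM' : IsDeterministicAssignment (spC m k) (spM m k) M') :
    (∀ j : Fin (2 * m),
      ((spC m k).filter fun c => M' c.1 (true, j) = 1 ∧ M' c.2 (true, j) = 1).card ≤ k) ∧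
    (∑ j : Fin (2 * m), ∑ c ∈ spC m k, (M' c.1 (true, j) + M' c.2 (true, j))
        ≤ 4 * (m : ℝ) * k) ∧
    (2 * (m : ℝ) ≤ ∑ j : Fin (2 * m), ∑ s ∈ spS m k, M' s (true, j)) := by
  obtain ⟨h01, hrow, hcouple, hcol⟩ := hM'
  have hm2 : (2 * (m : ℝ)) ≠ 0 := by positivity
  -- capacity of each h_j is 2k+1
  have hMcol : ∀ j : Fin (2 * m),
      ∑ i : SPIntern m k, spM m k i (true, j) = 2 * (k : ℝ) + 1 := by
    intro j
    rw [Fintype.sum_sum_type]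
    have h1 : ∀ a : Fin (2 * m * (2 * k + 1)), spM m k (Sum.inl a) (true, j) = 0 := by
      intro a; simp [spM]
    have h2 : ∀ p : Fin (m * (2 * k + 1)) × Bool,
        spM m k (Sum.inr p) (true, j) = 1 / (2 * m) := by
      intro p; simp [spM]
    rw [Finset.sum_congr rfl (fun a _ => h1 a), Finset.sum_congr rfl (fun p _ => h2 p)]
    simp only [Finset.sum_const, Finset.card_univ, nsmul_eq_mul, smul_zero,
      Fintype.card_prod, Fintype.card_fin, Fintype.card_bool]
    push_cast
    field_simp
    ring
  -- column sums of M'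
  have hcol' : ∀ j : Fin (2 * m),
      ∑ i : SPIntern m k, M' i (true, j) = 2 * (k : ℝ) + 1 := by
    intro j; rw [hcol (true, j), hMcol j]
  set N : Fin (2 * m) → ℕ := fun j =>
    ((spC m k).filter fun c => M' c.1 (true, j) = 1 ∧ M' c.2 (true, j) = 1).card with hN
  -- couple sum over spC equals 2 * N j
  have hcouplesum : ∀ j : Fin (2 * m),
      ∑ c ∈ spC m k, (M' c.1 (true, j) + M' c.2 (true, j)) = 2 * (N j : ℝ) := by
    intro j
    have heq : ∀ c ∈ spC m k,
        M' c.1 (true, j) + M' c.2 (true, j) = 2 * M' c.1 (true, j) := by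
      intro c hc; rw [← hcouple c hc (true, j)]; ring
    rw [Finset.sum_congr rfl heq, ← Finset.mul_sum]
    have hfil : ((spC m k).filter fun c => M' c.1 (true, j) = 1 ∧ M' c.2 (true, j) = 1)
        = (spC m k).filter fun c => M' c.1 (true, j) = 1 := by
      apply Finset.filter_congr
      intro c hc
      constructor
      · exact fun h => h.1
      · exact fun h => ⟨h, by rw [← hcouple c hc (true, j)]; exact h⟩
    rw [sp_sum_zero_one (spC m k) _ (fun c _ => h01 c.1 (true, j))]
    have hNj : N j = ((spC m k).filter fun c => M' c.1 (true, j) = 1).card :=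
      congrArg Finset.card hfil
    rw [hNj]
  -- the couple sum equals the sum over all inr interns
  have hinrsum : ∀ j : Fin (2 * m),
      ∑ c ∈ spC m k, (M' c.1 (true, j) + M' c.2 (true, j))
        = ∑ p : Fin (m * (2 * k + 1)) × Bool, M' (Sum.inr p) (true, j) := by
    intro j
    rw [spC, Finset.sum_image (fun a _ b _ h => spC_inj m k h)]
    rw [Fintype.sum_prod_type]
    apply Finset.sum_congr rfl
    intro a _
    rw [Fintype.sum_bool]
    simp [add_comm]
  -- singles sum equals sum over inl interns
  have hsinglesum : ∀ j : Fin (2 * m),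
      ∑ s ∈ spS m k, M' s (true, j)
        = ∑ a : Fin (2 * m * (2 * k + 1)), M' (Sum.inl a) (true, j) := by
    intro j
    rw [spS, Finset.sum_image (fun a _ b _ h => Sum.inl_injective h)]
  -- split: singles + couples = 2k+1
  have hsplit : ∀ j : Fin (2 * m),
      (∑ s ∈ spS m k, M' s (true, j))
        + ∑ c ∈ spC m k, (M' c.1 (true, j) + M' c.2 (true, j)) = 2 * (k : ℝ) + 1 := by
    intro j
    rw [hsinglesum j, hinrsum j, ← hcol' j, Fintype.sum_sum_type]
  -- singles sums are nonneg
  have hsingle_nonneg : ∀ j : Fin (2 * m), 0 ≤ ∑ s ∈ spS m k, M' s (true, j) := by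
    intro j
    apply Finset.sum_nonneg
    intro s _
    rcases h01 s (true, j) with h | h <;> rw [h] <;> norm_num
  -- part 1
  have part1 : ∀ j : Fin (2 * m), N j ≤ k := by
    intro j
    have h1 : 2 * (N j : ℝ) ≤ 2 * (k : ℝ) + 1 := by
      have := hsplit j
      nlinarith [hsingle_nonneg j, hcouplesum j]
    have : (N j : ℝ) ≤ (k : ℝ) + 1 / 2 := by linarith
    have h2 : (N j : ℕ) ≤ k := by
      by_contra hcon
      push_neg at hcon
      have : ((k : ℝ) + 1 ≤ (N j : ℝ)) := by exact_mod_cast hcon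
      linarith
    exact h2
  refine ⟨part1, ?_, ?_⟩
  · calc ∑ j : Fin (2 * m), ∑ c ∈ spC m k, (M' c.1 (true, j) + M' c.2 (true, j))
        ≤ ∑ j : Fin (2 * m), 2 * (k : ℝ) := by
          apply Finset.sum_le_sum
          intro j _
          rw [hcouplesum j]
          have := part1 j
          have : (N j : ℝ) ≤ (k : ℝ) := by exact_mod_cast this
          linarith
      _ = 4 * (m : ℝ) * k := by
          rw [Finset.sum_const, Finset.card_univ, Fintype.card_fin]
          push_cast; ring
  · have hlow : ∀ j : Fin (2 * m), 1 ≤ ∑ s ∈ spS m k, M' s (true, j) := by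
      intro j
      have h1 := hsplit j
      rw [hcouplesum j] at h1
      have : (N j : ℝ) ≤ (k : ℝ) := by exact_mod_cast part1 j
      linarith
    calc (2 * (m : ℝ)) = ∑ _j : Fin (2 * m), (1 : ℝ) := by
          rw [Finset.sum_const, Finset.card_univ, Fintype.card_fin]; push_cast; ring
      _ ≤ ∑ j : Fin (2 * m), ∑ s ∈ spS m k, M' s (true, j) :=
          Finset.sum_le_sum fun j _ => hlow j
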